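/- Let n ≥ 3 be an integer, set a := 2^{1/(n−1)} + 1 and γ₁ := (1 − n + √(n² + 6n − 7))/2, and fix constants c ≥ 0 and B ≥ 0. There exists a constant C, depending only on n, c and B, with the following property: for every R ≥ a + 1, all α, H > 0, and every twice differentiable g : [a, R] → ℝ satisfying r²·g''(r) + n·r·g'(r) = ψ(r) on [a, R], where |ψ(r)| ≤ H·(r/R)^{γ₁} + α·((r/R)^{0.1} + r^{−0.1}) + c·r^{1.1−n}, and satisfying |g(r)| ≤ B for all r ∈ [a, a+1], one has |g(r)| ≤ C·(|g(R)| + H + α + r^{1.1−n}) for all r ∈ [a, R]. -/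

import Mathlib

open Set

/-- Derivative of `q * y ^ p` (real power) at a nonzero point. -/
lemma bh_hasDerivAt (q p x : ℝ) (hx : x ≠ 0) :
    HasDerivAt (fun y => q * y ^ p) (q * p * x ^ (p - 1)) x := by
  have h := (Real.hasDerivAt_rpow_const (p := p) (Or.inl hx)).const_mul q
  have h2 : q * p * x ^ (p - 1) = q * (p * x ^ (p - 1)) := by ring
  rw [h2]; exact h

/-- Action of the operator `L = r² d² + m r d` on the monomial `q r^p`. -/
lemma bh_Lpow (m q p r : ℝ) (hr : 0 < r) :
    r ^ 2 * (q * p * (p - 1) * r ^ (p - 1 - 1)) + m * r * (q * p * r ^ (p - 1))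
      = q * (p * (p + m - 1)) * r ^ p := by
  have e1 : ((2 : ℕ) : ℝ) + (p - 1 - 1) = p := by push_cast; ring
  have h1 : r ^ 2 * r ^ (p - 1 - 1) = r ^ p := by
    rw [← Real.rpow_natCast r 2, ← Real.rpow_add hr, e1]
  have e2 : (1 : ℝ) + (p - 1) = p := by ring
  have h2 : r * r ^ (p - 1) = r ^ p := by
    nth_rewrite 1 [← Real.rpow_one r]
    rw [← Real.rpow_add hr, e2]
  linear_combination (q * p * (p - 1)) * h1 + (m * q * p) * h2

/-- Maximum principle for `L u = r² u'' + n r u'` on `[a, R]`: a subsolution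
(`L u > 0` in the interior) that is nonpositive at both endpoints is nonpositive. -/
lemma bh_max_principle (n : ℕ) (hn : 2 ≤ n) (a R : ℝ) (ha : 0 < a)
    (u u' u'' : ℝ → ℝ)
    (hu : ∀ r ∈ Icc a R, HasDerivWithinAt u (u' r) (Icc a R) r)
    (hu' : ∀ r ∈ Icc a R, HasDerivWithinAt u' (u'' r) (Icc a R) r)
    (hL : ∀ r ∈ Ioo a R, 0 < r ^ 2 * u'' r + (n : ℝ) * r * u' r)
    (hua : u a ≤ 0) (huR : u R ≤ 0) :
    ∀ r ∈ Icc a R, u r ≤ 0 := by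
  intro x hx
  set p : ℝ → ℝ := fun r => r ^ n * u' r with hp_def
  have hrpos : ∀ r ∈ Icc a R, 0 < r := fun r hr => lt_of_lt_of_le ha hr.1
  have hp : ∀ r ∈ Icc a R, HasDerivWithinAt p
      ((n : ℝ) * r ^ (n - 1) * u' r + r ^ n * u'' r) (Icc a R) r := by
    intro r hr
    exact ((hasDerivAt_pow n r).hasDerivWithinAt).mul (hu' r hr)
  have hpcont : ContinuousOn p (Icc a R) := fun r hr => (hp r hr).continuousWithinAt
  have hpderiv : ∀ r ∈ Ioo a R,
      HasDerivAt p ((n : ℝ) * r ^ (n - 1) * u' r + r ^ n * u'' r) r := by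
    intro r hr
    exact (hp r (Ioo_subset_Icc_self hr)).hasDerivAt (Icc_mem_nhds hr.1 hr.2)
  have hppos : ∀ r ∈ Ioo a R, 0 < deriv p r := by
    intro r hr
    rw [(hpderiv r hr).deriv]
    have hr0 : 0 < r := lt_of_lt_of_le ha hr.1.le
    have hkey : (n : ℝ) * r ^ (n - 1) * u' r + r ^ n * u'' r
        = r ^ (n - 2) * (r ^ 2 * u'' r + (n : ℝ) * r * u' r) := by
      obtain ⟨m, rfl⟩ : ∃ m, n = m + 2 := ⟨n - 2, by omega⟩
      simp [pow_succ]
      ring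
    rw [hkey]
    exact mul_pos (pow_pos hr0 _) (hL r hr)
  have hpmono : StrictMonoOn p (Icc a R) := by
    apply strictMonoOn_of_deriv_pos (convex_Icc a R) hpcont
    rwa [interior_Icc]
  have huderiv : ∀ r ∈ Ioo a R, HasDerivAt u (u' r) r := fun r hr =>
    (hu r (Ioo_subset_Icc_self hr)).hasDerivAt (Icc_mem_nhds hr.1 hr.2)
  rcases eq_or_lt_of_le hx.1 with h1 | h1
  · rwa [← h1]
  rcases eq_or_lt_of_le hx.2 with h2 | h2
  · rwa [h2]
  have hxIoo : x ∈ Ioo a R := ⟨h1, h2⟩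
  by_cases hpx : p x ≤ 0
  · -- `u` is antitone on `[a, x]`, hence `u x ≤ u a ≤ 0`.
    have hanti : AntitoneOn u (Icc a x) := by
      apply antitoneOn_of_deriv_nonpos (convex_Icc a x)
      · exact fun r hr =>
          ((hu r ⟨hr.1, hr.2.trans hx.2⟩).continuousWithinAt).mono
            (Icc_subset_Icc_right hx.2)
      · rw [interior_Icc]
        intro r hr
        exact ((huderiv r ⟨hr.1, hr.2.trans h2⟩).differentiableAt).differentiableWithinAt
      · rw [interior_Icc]
        intro r hr
        have hrIoo : r ∈ Ioo a R := ⟨hr.1, hr.2.trans h2⟩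
        rw [(huderiv r hrIoo).deriv]
        have hplt : p r < p x := hpmono (Ioo_subset_Icc_self hrIoo) hx hr.2
        have hr0 : 0 < r := lt_of_lt_of_le ha hr.1.le
        have : r ^ n * u' r ≤ 0 := le_of_lt (lt_of_lt_of_le hplt hpx)
        nlinarith [pow_pos hr0 n]
    have := hanti (left_mem_Icc.mpr h1.le) ⟨h1.le, le_rfl⟩ h1.le
    linarith
  · -- `u` is monotone on `[x, R]`, hence `u x ≤ u R ≤ 0`.
    push_neg at hpx
    have hmono : MonotoneOn u (Icc x R) := by
      apply monotoneOn_of_deriv_nonneg (convex_Icc x R)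
      · exact fun r hr =>
          ((hu r ⟨hx.1.trans hr.1, hr.2⟩).continuousWithinAt).mono
            (Icc_subset_Icc_left hx.1)
      · rw [interior_Icc]
        intro r hr
        exact ((huderiv r ⟨h1.trans hr.1, hr.2⟩).differentiableAt).differentiableWithinAt
      · rw [interior_Icc]
        intro r hr
        have hrIoo : r ∈ Ioo a R := ⟨h1.trans hr.1, hr.2⟩
        rw [(huderiv r hrIoo).deriv]
        have hplt : p x < p r := hpmono hx (Ioo_subset_Icc_self hrIoo) hr.1
        have hr0 : 0 < r := lt_of_lt_of_le ha (hx.1.trans hr.1.le)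
        have : 0 < r ^ n * u' r := lt_trans hpx hplt
        nlinarith [pow_pos hr0 n]
    have := hmono ⟨le_rfl, h2.le⟩ (right_mem_Icc.mpr hx.2) h2.le
    linarith

set_option maxHeartbeats 1600000 in
/-- **A priori estimate for the tangential components `r^{-2} h_{ij}`** on the black-hole
manifold `M_BH(r ≤ R)`: solutions `g` of `r² g'' + n r g' = ψ` on `[a, R]` with
`|ψ(r)| ≤ H (r/R)^{γ₁} + α((r/R)^{0.1} + r^{-0.1}) + c r^{1.1-n}` and `|g| ≤ B` on
`[a, a+1]` satisfy `|g(r)| ≤ C(|g(R)| + H + α + r^{1.1-n})`, with `C` independent of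
`R`, `α` and `H`. -/
theorem apriori_estimate_tangential (n : ℕ) (hn : 3 ≤ n) (a γ₁ : ℝ)
    (ha : a = (2 : ℝ) ^ ((1 : ℝ) / ((n : ℝ) - 1)) + 1)
    (hγ₁ : γ₁ = (1 - (n : ℝ) + Real.sqrt ((n : ℝ) ^ 2 + 6 * (n : ℝ) - 7)) / 2)
    (c B : ℝ) (hc : 0 ≤ c) (hB : 0 ≤ B) :
    ∃ C : ℝ, ∀ R : ℝ, a + 1 ≤ R → ∀ α H : ℝ, 0 < α → 0 < H →
      ∀ g g' g'' ψ : ℝ → ℝ,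
      (∀ r ∈ Set.Icc a R, HasDerivWithinAt g (g' r) (Set.Icc a R) r) →
      (∀ r ∈ Set.Icc a R, HasDerivWithinAt g' (g'' r) (Set.Icc a R) r) →
      (∀ r ∈ Set.Icc a R, r ^ 2 * g'' r + (n : ℝ) * r * g' r = ψ r) →
      (∀ r ∈ Set.Icc a R,
        |ψ r| ≤ H * (r / R) ^ γ₁ + α * ((r / R) ^ (0.1 : ℝ) + r ^ (-0.1 : ℝ))
          + c * r ^ (1.1 - (n : ℝ))) →
      (∀ r ∈ Set.Icc a (a + 1), |g r| ≤ B) →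
      ∀ r ∈ Set.Icc a R,
        |g r| ≤ C * (|g R| + H + α + r ^ (1.1 - (n : ℝ))) := by
  have hn3 : (3 : ℝ) ≤ (n : ℝ) := by exact_mod_cast hn
  have ha1 : 1 < a := by
    rw [ha]
    have : (0 : ℝ) < (2 : ℝ) ^ ((1 : ℝ) / ((n : ℝ) - 1)) :=
      Real.rpow_pos_of_pos (by norm_num) _
    linarith
  have ha0 : (0 : ℝ) < a := by linarith
  have hs0 : 0 ≤ Real.sqrt ((n : ℝ) ^ 2 + 6 * (n : ℝ) - 7) := Real.sqrt_nonneg _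
  have hs2 : Real.sqrt ((n : ℝ) ^ 2 + 6 * (n : ℝ) - 7) ^ 2
      = (n : ℝ) ^ 2 + 6 * (n : ℝ) - 7 := Real.sq_sqrt (by nlinarith)
  have hsgt : (n : ℝ) - 1 < Real.sqrt ((n : ℝ) ^ 2 + 6 * (n : ℝ) - 7) := by
    rw [show ((n : ℝ) ^ 2 + 6 * (n : ℝ) - 7) = ((n:ℝ)^2 + 6*(n:ℝ) - 7) from rfl]
    exact (Real.lt_sqrt (by nlinarith)).mpr (by nlinarith)
  have hγpos : 0 < γ₁ := by rw [hγ₁]; linarith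
  have hγid : γ₁ * (γ₁ + (n : ℝ) - 1) = 2 * ((n : ℝ) - 1) := by
    rw [hγ₁]; linear_combination hs2 / 4
  set K₁ : ℝ := 1 / (2 * ((n : ℝ) - 1)) with hK₁d
  set K₂ : ℝ := 10 / ((n : ℝ) - 0.9) with hK₂d
  set K₃ : ℝ := 10 / ((n : ℝ) - 1.1) with hK₃d
  clear_value K₁ K₂ K₃
  have hK₁ : 0 < K₁ := by rw [hK₁d]; apply div_pos one_pos; linarith
  have hK₂ : 0 < K₂ := by
    rw [hK₂d]; apply div_pos (by norm_num); norm_num; linarith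
  have hK₃ : 0 < K₃ := by
    rw [hK₃d]; apply div_pos (by norm_num); norm_num; linarith
  refine ⟨1 + B * a ^ ((n : ℝ) - 1) + c * K₃ + K₁ + K₂ + 2 * K₃, ?_⟩
  intro R hR α H hα hH g g' g'' ψ hg hg' heq hψ hb
  have haR : a < R := by linarith
  have hR0 : (0 : ℝ) < R := by linarith
  have hQ : ∀ r ∈ Icc a R, (0 : ℝ) < r := fun r hr => lt_of_lt_of_le ha0 hr.1
  have hRγ : 0 < R ^ γ₁ := Real.rpow_pos_of_pos hR0 _
  have hR01 : 0 < R ^ (0.1 : ℝ) := Real.rpow_pos_of_pos hR0 _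
  set q1 : ℝ := B * a ^ ((n : ℝ) - 1) with hq1d
  set q2 : ℝ := -(H * K₁ / R ^ γ₁) with hq2d
  set q3 : ℝ := -(α * K₂ / R ^ (0.1 : ℝ)) with hq3d
  set q4 : ℝ := 2 * α * K₃ with hq4d
  set q5 : ℝ := c * K₃ with hq5d
  clear_value q1 q2 q3 q4 q5
  have hq1nn : 0 ≤ q1 := by
    rw [hq1d]; exact mul_nonneg hB (Real.rpow_nonneg ha0.le _)
  have hq2np : q2 ≤ 0 := by
    rw [hq2d]
    exact neg_nonpos.mpr (div_nonneg (mul_nonneg hH.le hK₁.le) hRγ.le)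
  have hq3np : q3 ≤ 0 := by
    rw [hq3d]
    exact neg_nonpos.mpr (div_nonneg (mul_nonneg hα.le hK₂.le) hR01.le)
  have hq4nn : 0 ≤ q4 := by
    rw [hq4d]; positivity
  have hq5nn : 0 ≤ q5 := by
    rw [hq5d]; exact mul_nonneg hc hK₃.le
  -- the barrier function and its derivatives
  set w : ℝ → ℝ := fun y => (|g R| + H * K₁ + α * K₂) + q1 * y ^ (1 - (n : ℝ))
      + q2 * y ^ γ₁ + q3 * y ^ (0.1 : ℝ) + q4 * y ^ (-0.1 : ℝ)
      + q5 * y ^ (1.1 - (n : ℝ)) with hwd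
  set w' : ℝ → ℝ := fun y => q1 * (1 - (n : ℝ)) * y ^ (1 - (n : ℝ) - 1)
      + q2 * γ₁ * y ^ (γ₁ - 1) + q3 * (0.1 : ℝ) * y ^ ((0.1 : ℝ) - 1)
      + q4 * (-0.1 : ℝ) * y ^ ((-0.1 : ℝ) - 1)
      + q5 * (1.1 - (n : ℝ)) * y ^ (1.1 - (n : ℝ) - 1) with hw'd
  set w'' : ℝ → ℝ := fun y => q1 * (1 - (n : ℝ)) * (1 - (n : ℝ) - 1) * y ^ (1 - (n : ℝ) - 1 - 1)
      + q2 * γ₁ * (γ₁ - 1) * y ^ (γ₁ - 1 - 1)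
      + q3 * (0.1 : ℝ) * ((0.1 : ℝ) - 1) * y ^ ((0.1 : ℝ) - 1 - 1)
      + q4 * (-0.1 : ℝ) * ((-0.1 : ℝ) - 1) * y ^ ((-0.1 : ℝ) - 1 - 1)
      + q5 * (1.1 - (n : ℝ)) * (1.1 - (n : ℝ) - 1) * y ^ (1.1 - (n : ℝ) - 1 - 1) with hw''d
  clear_value w w' w''
  have hw : ∀ r ∈ Icc a R, HasDerivAt w (w' r) r := by
    intro r hr
    have hr0 : r ≠ 0 := (hQ r hr).ne'
    have h := ((((((hasDerivAt_const r (|g R| + H * K₁ + α * K₂)).add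
        (bh_hasDerivAt q1 (1 - (n : ℝ)) r hr0)).add
        (bh_hasDerivAt q2 γ₁ r hr0)).add
        (bh_hasDerivAt q3 (0.1 : ℝ) r hr0)).add
        (bh_hasDerivAt q4 (-0.1 : ℝ) r hr0)).add
        (bh_hasDerivAt q5 (1.1 - (n : ℝ)) r hr0))
    simpa only [hwd, hw'd, zero_add, Pi.add_def] using h
  have hw' : ∀ r ∈ Icc a R, HasDerivAt w' (w'' r) r := by
    intro r hr
    have hr0 : r ≠ 0 := (hQ r hr).ne'
    have h := (((((bh_hasDerivAt (q1 * (1 - (n : ℝ))) (1 - (n : ℝ) - 1) r hr0).add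
        (bh_hasDerivAt (q2 * γ₁) (γ₁ - 1) r hr0)).add
        (bh_hasDerivAt (q3 * (0.1 : ℝ)) ((0.1 : ℝ) - 1) r hr0)).add
        (bh_hasDerivAt (q4 * (-0.1 : ℝ)) ((-0.1 : ℝ) - 1) r hr0)).add
        (bh_hasDerivAt (q5 * (1.1 - (n : ℝ))) (1.1 - (n : ℝ) - 1) r hr0))
    simpa only [hw'd, hw''d, Pi.add_def] using h
  -- the operator applied to the barrier
  have hLw : ∀ r ∈ Icc a R, r ^ 2 * w'' r + (n : ℝ) * r * w' r
      = -(H * (r ^ γ₁ / R ^ γ₁)) - α * (r ^ (0.1 : ℝ) / R ^ (0.1 : ℝ))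
        - 2 * α * r ^ (-0.1 : ℝ) - c * r ^ (1.1 - (n : ℝ)) := by
    intro r hr
    have hr0 : 0 < r := hQ r hr
    have e1 := bh_Lpow (n : ℝ) q1 (1 - (n : ℝ)) r hr0
    have e2 := bh_Lpow (n : ℝ) q2 γ₁ r hr0
    have e3 := bh_Lpow (n : ℝ) q3 (0.1 : ℝ) r hr0
    have e4 := bh_Lpow (n : ℝ) q4 (-0.1 : ℝ) r hr0
    have e5 := bh_Lpow (n : ℝ) q5 (1.1 - (n : ℝ)) r hr0
    have hc1 : q1 * ((1 - (n : ℝ)) * ((1 - (n : ℝ)) + (n : ℝ) - 1)) = 0 := by ring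
    have hn1 : (n : ℝ) - 1 ≠ 0 := ne_of_gt (by linarith)
    have h9 : (n : ℝ) - 0.9 ≠ 0 := ne_of_gt (by linarith)
    have h11 : (n : ℝ) - 1.1 ≠ 0 := ne_of_gt (by linarith)
    have hc2 : q2 * (γ₁ * (γ₁ + (n : ℝ) - 1)) = -(H / R ^ γ₁) := by
      rw [hγid, hq2d, hK₁d]
      field_simp
    have hc3 : q3 * ((0.1 : ℝ) * ((0.1 : ℝ) + (n : ℝ) - 1)) = -(α / R ^ (0.1 : ℝ)) := by
      rw [hq3d, hK₂d]
      field_simp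
      ring
    have hc4 : q4 * ((-0.1 : ℝ) * ((-0.1 : ℝ) + (n : ℝ) - 1)) = -(2 * α) := by
      rw [hq4d, hK₃d]
      field_simp
      ring
    have hc5 : q5 * ((1.1 - (n : ℝ)) * ((1.1 - (n : ℝ)) + (n : ℝ) - 1)) = -c := by
      rw [hq5d, hK₃d]
      field_simp
      ring
    simp only [hw'd, hw''d]
    linear_combination e1 + e2 + e3 + e4 + e5 + r ^ (1 - (n : ℝ)) * hc1
      + r ^ γ₁ * hc2 + r ^ (0.1 : ℝ) * hc3 + r ^ (-0.1 : ℝ) * hc4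
      + r ^ (1.1 - (n : ℝ)) * hc5
  -- lower bound for the barrier
  have hwlow : ∀ r ∈ Icc a R, |g R| + q1 * r ^ (1 - (n : ℝ)) ≤ w r := by
    intro r hr
    have hr0 : 0 < r := hQ r hr
    have hγr : r ^ γ₁ ≤ R ^ γ₁ := Real.rpow_le_rpow hr0.le hr.2 hγpos.le
    have h01r : r ^ (0.1 : ℝ) ≤ R ^ (0.1 : ℝ) :=
      Real.rpow_le_rpow hr0.le hr.2 (by norm_num)
    have f2 : 0 ≤ H * K₁ + q2 * r ^ γ₁ := by
      rw [hq2d]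
      have h := mul_le_mul_of_nonneg_left hγr
        (div_nonneg (mul_nonneg hH.le hK₁.le) hRγ.le)
      rw [div_mul_cancel₀ _ (ne_of_gt hRγ)] at h
      linarith
    have f3 : 0 ≤ α * K₂ + q3 * r ^ (0.1 : ℝ) := by
      rw [hq3d]
      have h := mul_le_mul_of_nonneg_left h01r
        (div_nonneg (mul_nonneg hα.le hK₂.le) hR01.le)
      rw [div_mul_cancel₀ _ (ne_of_gt hR01)] at h
      linarith
    have f4 : 0 ≤ q4 * r ^ (-0.1 : ℝ) :=
      mul_nonneg hq4nn (Real.rpow_nonneg hr0.le _)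
    have f5 : 0 ≤ q5 * r ^ (1.1 - (n : ℝ)) :=
      mul_nonneg hq5nn (Real.rpow_nonneg hr0.le _)
    simp only [hwd]
    linarith
  have hwa : B ≤ w a := by
    have h := hwlow a ⟨le_rfl, haR.le⟩
    have hprod : q1 * a ^ (1 - (n : ℝ)) = B := by
      rw [hq1d, mul_assoc, ← Real.rpow_add ha0,
        show ((n : ℝ) - 1) + (1 - (n : ℝ)) = 0 by ring, Real.rpow_zero, mul_one]
    rw [hprod] at h
    linarith [abs_nonneg (g R)]
  have hwR : |g R| ≤ w R := by
    have h := hwlow R ⟨haR.le, le_rfl⟩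
    have := mul_nonneg hq1nn (Real.rpow_nonneg hR0.le (1 - (n : ℝ)))
    linarith
  have hn2 : 2 ≤ n := by omega
  have hmax1 : ∀ r ∈ Icc a R, g r - w r ≤ 0 := by
    apply bh_max_principle n hn2 a R ha0 (fun r => g r - w r)
      (fun r => g' r - w' r) (fun r => g'' r - w'' r)
    · intro r hr
      exact (hg r hr).sub (hw r hr).hasDerivWithinAt
    · intro r hr
      exact (hg' r hr).sub (hw' r hr).hasDerivWithinAt
    · intro r hr
      show 0 < r ^ 2 * (g'' r - w'' r) + (n : ℝ) * r * (g' r - w' r)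
      have hrI : r ∈ Icc a R := Ioo_subset_Icc_self hr
      have hr0 : 0 < r := hQ r hrI
      have hψr := hψ r hrI
      rw [Real.div_rpow hr0.le hR0.le, Real.div_rpow hr0.le hR0.le] at hψr
      have hid : r ^ 2 * (g'' r - w'' r) + (n : ℝ) * r * (g' r - w' r)
          = ψ r + (H * (r ^ γ₁ / R ^ γ₁) + α * (r ^ (0.1 : ℝ) / R ^ (0.1 : ℝ))
            + 2 * α * r ^ (-0.1 : ℝ) + c * r ^ (1.1 - (n : ℝ))) := by
        linear_combination (heq r hrI) - (hLw r hrI)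
      rw [hid]
      have habs := neg_abs_le (ψ r)
      nlinarith [mul_pos hα (Real.rpow_pos_of_pos hr0 (-0.1 : ℝ))]
    · show g a - w a ≤ 0
      have hga := hb a ⟨le_rfl, by linarith⟩
      have := le_abs_self (g a)
      linarith
    · show g R - w R ≤ 0
      have := le_abs_self (g R)
      linarith
  have hmax2 : ∀ r ∈ Icc a R, -g r - w r ≤ 0 := by
    apply bh_max_principle n hn2 a R ha0 (fun r => -g r - w r)
      (fun r => -g' r - w' r) (fun r => -g'' r - w'' r)
    · intro r hr
      exact ((hg r hr).neg).sub (hw r hr).hasDerivWithinAt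
    · intro r hr
      exact ((hg' r hr).neg).sub (hw' r hr).hasDerivWithinAt
    · intro r hr
      show 0 < r ^ 2 * (-g'' r - w'' r) + (n : ℝ) * r * (-g' r - w' r)
      have hrI : r ∈ Icc a R := Ioo_subset_Icc_self hr
      have hr0 : 0 < r := hQ r hrI
      have hψr := hψ r hrI
      rw [Real.div_rpow hr0.le hR0.le, Real.div_rpow hr0.le hR0.le] at hψr
      have hid : r ^ 2 * (-g'' r - w'' r) + (n : ℝ) * r * (-g' r - w' r)
          = -ψ r + (H * (r ^ γ₁ / R ^ γ₁) + α * (r ^ (0.1 : ℝ) / R ^ (0.1 : ℝ))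
            + 2 * α * r ^ (-0.1 : ℝ) + c * r ^ (1.1 - (n : ℝ))) := by
        linear_combination -(heq r hrI) - (hLw r hrI)
      rw [hid]
      have habs := le_abs_self (ψ r)
      nlinarith [mul_pos hα (Real.rpow_pos_of_pos hr0 (-0.1 : ℝ))]
    · show -g a - w a ≤ 0
      have hga := hb a ⟨le_rfl, by linarith⟩
      have := neg_abs_le (g a)
      linarith
    · show -g R - w R ≤ 0
      have := neg_abs_le (g R)
      linarith
  -- conclusion
  intro r hr
  have h1 := hmax1 r hr
  have h2 := hmax2 r hr
  have habsw : |g r| ≤ w r := abs_le.mpr ⟨by linarith, by linarith⟩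
  have hr1 : (1 : ℝ) ≤ r := le_trans ha1.le hr.1
  have hr0 : 0 < r := hQ r hr
  have hX : 0 ≤ r ^ (1.1 - (n : ℝ)) := Real.rpow_nonneg hr0.le _
  have t1 : q1 * r ^ (1 - (n : ℝ)) ≤ q1 * r ^ (1.1 - (n : ℝ)) :=
    mul_le_mul_of_nonneg_left
      (Real.rpow_le_rpow_of_exponent_le hr1 (by linarith)) hq1nn
  have t2 : q2 * r ^ γ₁ ≤ 0 :=
    mul_nonpos_of_nonpos_of_nonneg hq2np (Real.rpow_nonneg hr0.le _)
  have t3 : q3 * r ^ (0.1 : ℝ) ≤ 0 :=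
    mul_nonpos_of_nonpos_of_nonneg hq3np (Real.rpow_nonneg hr0.le _)
  have t4 : q4 * r ^ (-0.1 : ℝ) ≤ q4 := by
    have := Real.rpow_le_one_of_one_le_of_nonpos hr1 (by norm_num : (-0.1 : ℝ) ≤ 0)
    nlinarith
  have hwup : w r ≤ |g R| + K₁ * H + K₂ * α + q1 * r ^ (1.1 - (n : ℝ))
      + q4 + q5 * r ^ (1.1 - (n : ℝ)) := by
    simp only [hwd]
    linarith
  have hG : 0 ≤ |g R| := abs_nonneg _
  have hS : 0 ≤ |g R| + H + α + r ^ (1.1 - (n : ℝ)) := by linarith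
  have haB : 0 ≤ B * a ^ ((n : ℝ) - 1) := by rw [hq1d] at hq1nn; exact hq1nn
  have c0 : |g R| ≤ 1 * (|g R| + H + α + r ^ (1.1 - (n : ℝ))) := by linarith
  have c1 : K₁ * H ≤ K₁ * (|g R| + H + α + r ^ (1.1 - (n : ℝ))) :=
    mul_le_mul_of_nonneg_left (by linarith) hK₁.le
  have c2 : K₂ * α ≤ K₂ * (|g R| + H + α + r ^ (1.1 - (n : ℝ))) :=
    mul_le_mul_of_nonneg_left (by linarith) hK₂.le
  have c3 : (B * a ^ ((n : ℝ) - 1)) * r ^ (1.1 - (n : ℝ))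
      ≤ (B * a ^ ((n : ℝ) - 1)) * (|g R| + H + α + r ^ (1.1 - (n : ℝ))) :=
    mul_le_mul_of_nonneg_left (by linarith) haB
  have c4 : (2 * K₃) * α ≤ (2 * K₃) * (|g R| + H + α + r ^ (1.1 - (n : ℝ))) :=
    mul_le_mul_of_nonneg_left (by linarith) (by linarith)
  have c5 : (c * K₃) * r ^ (1.1 - (n : ℝ))
      ≤ (c * K₃) * (|g R| + H + α + r ^ (1.1 - (n : ℝ))) :=
    mul_le_mul_of_nonneg_left (by linarith) (mul_nonneg hc hK₃.le)
  rw [hq1d, hq4d, hq5d] at hwup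
  rw [hq1d, hq5d]
  linarith
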